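/- arXiv:0809.3359 — 5 statements merged into one kernel-verified Lean document; each statement's English description precedes it below -/
import Mathlib

section
/- Let D be an invertible Hermitian n×n matrix and x a nonzero vector with x* D⁻¹ x = 1. Define G = I − (x* D⁻² x)⁻¹ D⁻¹ x x* D⁻¹. Then G is the orthogonal projector onto the range of D − x x*, and the Moore–Penrose inverse of D − x x* equals G D⁻¹ G. -/
open Matrix

/-- `B` is the Moore–Penrose inverse of `A` (the four Penrose conditions). -/
def IsMoorePenroseInv {n : ℕ} (A B : Matrix (Fin n) (Fin n) ℂ) : Prop :=
  A * B * A = A ∧ B * A * B = B ∧ (A * B)ᴴ = A * B ∧ (B * A)ᴴ = B * A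

section ShermanAux

variable {n : ℕ}

lemma sm_mul_vecMulVec (A : Matrix (Fin n) (Fin n) ℂ) (u v : Fin n → ℂ) :
    A * vecMulVec u v = vecMulVec (A *ᵥ u) v := by
  ext i j
  simp only [mul_apply, vecMulVec_apply, mulVec, dotProduct, Finset.sum_mul]
  exact Finset.sum_congr rfl fun k _ => by ring

lemma sm_vecMulVec_mul (A : Matrix (Fin n) (Fin n) ℂ) (u v : Fin n → ℂ) :
    vecMulVec u v * A = vecMulVec u (v ᵥ* A) := by
  ext i j
  simp only [mul_apply, vecMulVec_apply, vecMul, dotProduct, Finset.mul_sum]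
  exact Finset.sum_congr rfl fun k _ => by ring

lemma sm_vecMulVec_mul_vecMulVec (a b c d : Fin n → ℂ) :
    vecMulVec a b * vecMulVec c d = (b ⬝ᵥ c) • vecMulVec a d := by
  ext i j
  simp only [mul_apply, vecMulVec_apply, Matrix.smul_apply, dotProduct, smul_eq_mul,
    Finset.sum_mul]
  exact Finset.sum_congr rfl fun k _ => by ring

lemma sm_vecMulVec_conjT (y : Fin n → ℂ) :
    (vecMulVec y (star y))ᴴ = vecMulVec y (star y) := by
  ext i j
  simp [conjTranspose_apply, vecMulVec_apply, mul_comm]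

end ShermanAux

/-- Rank-one update at the singular point `x* D⁻¹ x = 1`: the matrix
`G = I − (x* D⁻² x)⁻¹ D⁻¹ x x* D⁻¹` is the orthogonal projector onto the range of
`D − x x*`, and the Moore–Penrose inverse of `D − x x*` is `G D⁻¹ G`. -/
theorem sherman_morrison_singular {n : ℕ} (D : Matrix (Fin n) (Fin n) ℂ)
    (hD : IsUnit D) (hherm : D.IsHermitian)
    (x : Fin n → ℂ) (hx : x ≠ 0)
    (h1 : star x ⬝ᵥ D⁻¹.mulVec x = 1)
    (G : Matrix (Fin n) (Fin n) ℂ)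
    (hG : G = 1 - (star x ⬝ᵥ (D⁻¹ * D⁻¹).mulVec x)⁻¹ •
      (D⁻¹ * vecMulVec x (star x) * D⁻¹)) :
    (G * G = G ∧ Gᴴ = G ∧
      LinearMap.range G.mulVecLin
        = LinearMap.range (D - vecMulVec x (star x)).mulVecLin) ∧
    IsMoorePenroseInv (D - vecMulVec x (star x)) (G * D⁻¹ * G) := by
  have hdet : IsUnit D.det := (Matrix.isUnit_iff_isUnit_det D).mp hD
  have hDi : D * D⁻¹ = 1 := Matrix.mul_nonsing_inv D hdet
  have hiD : D⁻¹ * D = 1 := Matrix.nonsing_inv_mul D hdet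
  set y : Fin n → ℂ := D⁻¹ *ᵥ x with hy
  have hsy : star x ᵥ* D⁻¹ = star y := by
    rw [hy, star_mulVec, hherm.inv.eq]
  set c : ℂ := star x ⬝ᵥ (D⁻¹ * D⁻¹) *ᵥ x with hcdef
  have hc : c = star y ⬝ᵥ y := by
    rw [hcdef, ← mulVec_mulVec, dotProduct_mulVec, hsy, hy]
  have hy1 : star x ⬝ᵥ y = 1 := h1
  have hyx1 : star y ⬝ᵥ x = 1 := by
    have : star y ⬝ᵥ x = star (star x ⬝ᵥ y) := by
      simp [dotProduct, mul_comm]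
    rw [this, hy1, star_one]
  have hcstar : star c = c := by
    rw [hc]
    simp [dotProduct, mul_comm]
  have hc0 : c ≠ 0 := by
    rw [hc]
    intro h
    have hy0 : y = 0 := by
      open scoped ComplexOrder in
      simpa using (dotProduct_star_self_eq_zero (v := y)).mp h
    rw [hy0] at hy1
    simp at hy1
  set P : Matrix (Fin n) (Fin n) ℂ := vecMulVec y (star y) with hPdef
  have hP : D⁻¹ * vecMulVec x (star x) * D⁻¹ = P := by
    rw [sm_mul_vecMulVec, sm_vecMulVec_mul, hsy, hPdef]
  have hG' : G = 1 - c⁻¹ • P := by rw [hG, hP]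
  have hPP : P * P = c • P := by
    rw [hPdef, sm_vecMulVec_mul_vecMulVec, ← hc]
  have haa : (c⁻¹ • P) * (c⁻¹ • P) = c⁻¹ • P := by
    rw [smul_mul_assoc, mul_smul_comm, hPP, smul_smul, smul_smul]
    congr 1
    field_simp
  have hGG : G * G = G := by
    rw [hG', sub_mul, mul_sub, mul_sub, haa]
    simp only [one_mul, mul_one]
    abel
  have hGH : Gᴴ = G := by
    rw [hG', conjTranspose_sub, conjTranspose_one, conjTranspose_smul, hPdef,
      sm_vecMulVec_conjT]
    congr 1
    rw [star_inv₀, hcstar]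
  set A : Matrix (Fin n) (Fin n) ℂ := D - vecMulVec x (star x) with hA
  have hDy : D *ᵥ y = x := by
    rw [hy, mulVec_mulVec, hDi, one_mulVec]
  have hsyD : star y ᵥ* D = star x := by
    rw [← hsy, vecMul_vecMul, hiD, vecMul_one]
  have hAP : A * P = 0 := by
    rw [hA, hPdef, sub_mul, sm_mul_vecMulVec, hDy, sm_vecMulVec_mul_vecMulVec,
      hy1, one_smul, sub_self]
  have hPA : P * A = 0 := by
    rw [hA, hPdef, mul_sub, sm_vecMulVec_mul, hsyD, sm_vecMulVec_mul_vecMulVec,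
      hyx1, one_smul, sub_self]
  have hAG : A * G = A := by
    rw [hG', mul_sub, mul_one, mul_smul_comm, hAP, smul_zero, sub_zero]
  have hGA : G * A = A := by
    rw [hG', sub_mul, one_mul, smul_mul_assoc, hPA, smul_zero, sub_zero]
  have hADi : A * D⁻¹ = 1 - vecMulVec x (star y) := by
    rw [hA, sub_mul, hDi, sm_vecMulVec_mul, hsy]
  have hDiA : D⁻¹ * A = 1 - vecMulVec y (star x) := by
    rw [hA, mul_sub, hiD, sm_mul_vecMulVec, hy]
  have hxyG : vecMulVec x (star y) * G = 0 := by
    rw [hG', mul_sub, mul_one, mul_smul_comm, hPdef, sm_vecMulVec_mul_vecMulVec,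
      ← hc, smul_smul, inv_mul_cancel₀ hc0, one_smul, sub_self]
  have hGyx : G * vecMulVec y (star x) = 0 := by
    rw [hG', sub_mul, one_mul, smul_mul_assoc, hPdef, sm_vecMulVec_mul_vecMulVec,
      ← hc, smul_smul, inv_mul_cancel₀ hc0, one_smul, sub_self]
  have hADG : A * D⁻¹ * G = G := by
    rw [hADi, sub_mul, one_mul, hxyG, sub_zero]
  have hGDA : G * (D⁻¹ * A) = G := by
    rw [hDiA, mul_sub, mul_one, hGyx, sub_zero]
  have hAB : A * (G * D⁻¹ * G) = G := by
    rw [← mul_assoc, ← mul_assoc, hAG, hADG]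
  have hBA : G * D⁻¹ * G * A = G := by
    rw [mul_assoc, hGA, mul_assoc, hGDA]
  refine ⟨⟨hGG, hGH, ?_⟩, ?_, ?_, ?_, ?_⟩
  · refine le_antisymm ?_ ?_
    · have h := hAB
      rw [← mul_assoc] at h
      -- (A * (G * D⁻¹)) * G = G  — we need G = A * ((G*D⁻¹)*G) form instead
      have h2 : A * (G * D⁻¹ * G) = G := hAB
      calc LinearMap.range G.mulVecLin
          = LinearMap.range (A * (G * D⁻¹ * G)).mulVecLin := by rw [h2]
        _ ≤ LinearMap.range A.mulVecLin := by
            rw [Matrix.mulVecLin_mul]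
            exact LinearMap.range_comp_le_range _ _
    · calc LinearMap.range A.mulVecLin
          = LinearMap.range (G * A).mulVecLin := by rw [hGA]
        _ ≤ LinearMap.range G.mulVecLin := by
            rw [Matrix.mulVecLin_mul]
            exact LinearMap.range_comp_le_range _ _
  · rw [hAB, hGA]
  · rw [hBA, ← mul_assoc, ← mul_assoc, hGG]
  · rw [hAB, hGH]
  · rw [hBA, hGH]
end

section
/- Let f₁,…,f_d be nonnegative integers with Σᵢ fᵢ = N and let Σ be the covariance matrix of the Dirichlet distribution with parameters αᵢ = fᵢ+1, i.e. Σ = [(N+d) Diag(f+1) − (f+1)(f+1)ᵀ] / ((N+d)²(N+d+1)). Let G = I − d⁻¹ 1 1ᵀ be the orthogonal projector onto the subspace of vectors with zero component sum. Then the Moore–Penrose inverse of Σ equals (N+d)(N+d+1) · G Diag(f+1)⁻¹ G. -/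
open Matrix

/-- `B` is the Moore–Penrose inverse of `A` (the four Penrose conditions, real case). -/
def IsMoorePenroseInvR {n : ℕ} (A B : Matrix (Fin n) (Fin n) ℝ) : Prop :=
  A * B * A = A ∧ B * A * B = B ∧ (A * B)ᵀ = A * B ∧ (B * A)ᵀ = B * A

lemma vmv_mul_vmv {n : ℕ} (u v w x : Fin n → ℝ) :
    vecMulVec u v * vecMulVec w x = (∑ i, v i * w i) • vecMulVec u x := by
  ext i j
  simp only [Matrix.mul_apply, vecMulVec_apply, Matrix.smul_apply, smul_eq_mul,
    Finset.sum_mul]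
  exact Finset.sum_congr rfl fun k _ => by ring

lemma vmv_mul_diag {n : ℕ} (u v g : Fin n → ℝ) :
    vecMulVec u v * Matrix.diagonal g = vecMulVec u (fun i => v i * g i) := by
  ext i j
  simp [Matrix.mul_diagonal, vecMulVec_apply, mul_assoc]

lemma diag_mul_vmv {n : ℕ} (u v g : Fin n → ℝ) :
    Matrix.diagonal g * vecMulVec u v = vecMulVec (fun i => g i * u i) v := by
  ext i j
  simp [Matrix.diagonal_mul, vecMulVec_apply, mul_assoc]

lemma vmv_transpose {n : ℕ} (u v : Fin n → ℝ) :
    (vecMulVec u v)ᵀ = vecMulVec v u := by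
  ext i j; simp [vecMulVec_apply, mul_comm]

lemma mp_main {d : ℕ} (hd : (d : ℝ) ≠ 0) (v : Fin d → ℝ) (hv : ∀ i, v i ≠ 0)
    (m : ℝ) (hm : m ≠ 0) (hm1 : m + 1 ≠ 0) (hsum : ∑ i, v i = m) :
    IsMoorePenroseInvR
      ((m ^ 2 * (m + 1))⁻¹ • (m • Matrix.diagonal v - vecMulVec v v))
      ((m * (m + 1)) •
        ((1 - (d : ℝ)⁻¹ • vecMulVec (fun _ => (1:ℝ)) (fun _ => (1:ℝ))) *
          Matrix.diagonal (fun i => (v i)⁻¹) *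
          (1 - (d : ℝ)⁻¹ • vecMulVec (fun _ => (1:ℝ)) (fun _ => (1:ℝ))))) := by
  set J : Matrix (Fin d) (Fin d) ℝ := vecMulVec (fun _ => (1:ℝ)) (fun _ => (1:ℝ)) with hJ
  set G : Matrix (Fin d) (Fin d) ℝ := 1 - (d : ℝ)⁻¹ • J with hGdef
  set D : Matrix (Fin d) (Fin d) ℝ := Matrix.diagonal v with hD
  set Di : Matrix (Fin d) (Fin d) ℝ := Matrix.diagonal (fun i => (v i)⁻¹) with hDi
  set T : Matrix (Fin d) (Fin d) ℝ := m • D - vecMulVec v v with hT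
  have sum1 : ∑ _i : Fin d, (1:ℝ) = (d : ℝ) := by simp
  have hJJ : J * J = (d : ℝ) • J := by
    rw [hJ, vmv_mul_vmv]; simp
  have hGG : G * G = G := by
    have h1 : (d : ℝ)⁻¹ * ((d : ℝ)⁻¹ * (d : ℝ)) = (d : ℝ)⁻¹ := by field_simp
    rw [hGdef]
    simp only [mul_sub, sub_mul, one_mul, mul_one, Matrix.smul_mul, Matrix.mul_smul, hJJ,
      smul_smul, h1]
    abel
  have hGsymm : Gᵀ = G := by
    rw [hGdef, transpose_sub, transpose_smul, transpose_one, hJ, vmv_transpose]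
  have hJD : J * D = vecMulVec (fun _ => (1:ℝ)) v := by
    rw [hJ, hD, vmv_mul_diag]; simp
  have hDJ : D * J = vecMulVec v (fun _ => (1:ℝ)) := by
    rw [hJ, hD, diag_mul_vmv]; simp
  have hJT : J * T = 0 := by
    rw [hT, mul_sub, Matrix.mul_smul, hJD, hJ, vmv_mul_vmv]
    simp only [one_mul, hsum]
    rw [sub_self]
  have hTJ : T * J = 0 := by
    rw [hT, sub_mul, Matrix.smul_mul, hDJ, hJ, vmv_mul_vmv]
    simp only [mul_one, hsum]
    rw [sub_self]
  have hGT : G * T = T := by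
    rw [hGdef, sub_mul, one_mul, Matrix.smul_mul, hJT, smul_zero, sub_zero]
  have hTG : T * G = T := by
    rw [hGdef, mul_sub, mul_one, Matrix.mul_smul, hTJ, smul_zero, sub_zero]
  have hDDi : D * Di = 1 := by
    rw [hD, hDi, Matrix.diagonal_mul_diagonal]
    rw [show (fun i => v i * (v i)⁻¹) = fun _ => (1:ℝ) from funext fun i => mul_inv_cancel₀ (hv i)]
    exact Matrix.diagonal_one
  have hVDi : vecMulVec v v * Di = vecMulVec v (fun _ => (1:ℝ)) := by
    rw [hDi, vmv_mul_diag,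
      show (fun i => v i * (v i)⁻¹) = fun _ => (1:ℝ) from funext fun i => mul_inv_cancel₀ (hv i)]
  have hDiV : Di * vecMulVec v v = vecMulVec (fun _ => (1:ℝ)) v := by
    rw [hDi, diag_mul_vmv,
      show (fun i => (v i)⁻¹ * v i) = fun _ => (1:ℝ) from funext fun i => inv_mul_cancel₀ (hv i)]
  have hWG : vecMulVec v (fun _ => (1:ℝ)) * G = 0 := by
    rw [hGdef, mul_sub, mul_one, Matrix.mul_smul, hJ, vmv_mul_vmv]
    simp only [mul_one, sum1, smul_smul]
    rw [inv_mul_cancel₀ hd, one_smul, sub_self]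
  have hGW : G * vecMulVec (fun _ => (1:ℝ)) v = 0 := by
    rw [hGdef, sub_mul, one_mul, Matrix.smul_mul, hJ, vmv_mul_vmv]
    simp only [one_mul, sum1, smul_smul]
    rw [inv_mul_cancel₀ hd, one_smul, sub_self]
  have hTDi : T * Di = m • (1 : Matrix (Fin d) (Fin d) ℝ) - vecMulVec v (fun _ => (1:ℝ)) := by
    rw [hT, sub_mul, Matrix.smul_mul, hDDi, hVDi]
  have hDiT : Di * T = m • (1 : Matrix (Fin d) (Fin d) ℝ) - vecMulVec (fun _ => (1:ℝ)) v := by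
    rw [hT, mul_sub, Matrix.mul_smul, hDi, hD, Matrix.diagonal_mul_diagonal]
    rw [show (fun i => (v i)⁻¹ * v i) = fun _ => (1:ℝ) from funext fun i => inv_mul_cancel₀ (hv i)]
    rw [Matrix.diagonal_one, hDiV]
  have hTB : T * (G * Di * G) = m • G := by
    calc T * (G * Di * G) = (T * G) * Di * G := by rw [← mul_assoc, ← mul_assoc]
    _ = (T * Di) * G := by rw [hTG]
    _ = (m • (1 : Matrix (Fin d) (Fin d) ℝ) - vecMulVec v (fun _ => (1:ℝ))) * G := by rw [hTDi]
    _ = m • G - vecMulVec v (fun _ => (1:ℝ)) * G := by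
        rw [sub_mul, Matrix.smul_mul, one_mul]
    _ = m • G := by rw [hWG, sub_zero]
  have hBT : (G * Di * G) * T = m • G := by
    calc (G * Di * G) * T = G * (Di * (G * T)) := by rw [mul_assoc, mul_assoc]
    _ = G * (Di * T) := by rw [hGT]
    _ = G * (m • (1 : Matrix (Fin d) (Fin d) ℝ)) - G * vecMulVec (fun _ => (1:ℝ)) v := by
        rw [hDiT, mul_sub]
    _ = m • G := by rw [hGW, sub_zero, Matrix.mul_smul, mul_one]
  set c : ℝ := m ^ 2 * (m + 1) with hc
  set k : ℝ := m * (m + 1) with hk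
  have hc0 : c ≠ 0 := by
    rw [hc]; exact mul_ne_zero (pow_ne_zero _ hm) hm1
  have hckm : c⁻¹ * k * m = 1 := by
    rw [hc, hk]; field_simp
  have hSB : (c⁻¹ • T) * (k • (G * Di * G)) = G := by
    rw [Matrix.smul_mul, Matrix.mul_smul, hTB, smul_smul, smul_smul, hckm, one_smul]
  have hBS : (k • (G * Di * G)) * (c⁻¹ • T) = G := by
    rw [Matrix.smul_mul, Matrix.mul_smul, hBT, smul_smul, smul_smul]
    rw [show k * c⁻¹ * m = c⁻¹ * k * m by ring, hckm, one_smul]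
  refine ⟨?_, ?_, ?_, ?_⟩
  · rw [hSB, Matrix.mul_smul, hGT]
  · rw [hBS, Matrix.mul_smul, ← mul_assoc, ← mul_assoc, hGG]
  · rw [hSB, hGsymm]
  · rw [hBS, hGsymm]

/-- The Moore–Penrose inverse of the Dirichlet covariance matrix equals
`(N+d)(N+d+1) G Diag(f+1)⁻¹ G` where `G = I − d⁻¹ 1 1ᵀ`. -/
theorem dirichlet_cov_mp_inverse {d N : ℕ} (f : Fin d → ℕ) (hf : ∑ i, f i = N)
    (S G : Matrix (Fin d) (Fin d) ℝ)
    (hS : S = (((N : ℝ) + d) ^ 2 * ((N : ℝ) + d + 1))⁻¹ •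
      (((N : ℝ) + d) • Matrix.diagonal (fun i => (f i : ℝ) + 1)
        - vecMulVec (fun i => (f i : ℝ) + 1) (fun i => (f i : ℝ) + 1)))
    (hG : G = 1 - (d : ℝ)⁻¹ • vecMulVec (fun _ => 1) (fun _ => 1)) :
    IsMoorePenroseInvR S
      ((((N : ℝ) + d) * ((N : ℝ) + d + 1)) •
        (G * Matrix.diagonal (fun i => ((f i : ℝ) + 1)⁻¹) * G)) := by
  rcases Nat.eq_zero_or_pos d with hd0 | hd0
  · subst hd0
    exact ⟨Subsingleton.elim _ _, Subsingleton.elim _ _, Subsingleton.elim _ _,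
      Subsingleton.elim _ _⟩
  · have hd : (d : ℝ) ≠ 0 := by positivity
    have hm : (N : ℝ) + d ≠ 0 := by positivity
    have hm1 : (N : ℝ) + d + 1 ≠ 0 := by positivity
    have hv : ∀ i : Fin d, (f i : ℝ) + 1 ≠ 0 := fun i => by positivity
    have hsum : ∑ i, ((f i : ℝ) + 1) = (N : ℝ) + d := by
      rw [Finset.sum_add_distrib]
      simp [← hf]
    subst hS hG
    exact mp_main hd (fun i => (f i : ℝ) + 1) hv ((N : ℝ) + d) hm hm1 hsum
end

section
/- Let X be an n-dimensional Gaussian random vector with mean μ and positive-semidefinite covariance Σ of rank ν, such that X − μ lies almost surely in the range of Σ. Then the squared Mahalanobis distance M² = (X−μ)* Σ† (X−μ) has a chi-squared distribution with ν degrees of freedom. -/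
open Matrix MeasureTheory ProbabilityTheory
open scoped ENNReal NNReal

set_option linter.unusedVariables false

lemma aux_lintegral_pi : ∀ (n : ℕ) (f : Fin n → ℝ → ℝ≥0∞), (∀ i, Measurable (f i)) →
    ∫⁻ z, ∏ i, f i (z i) ∂(Measure.pi fun _ : Fin n => (volume : Measure ℝ)) =
      ∏ i, ∫⁻ x, f i x := by
  intro n
  induction n with
  | zero =>
    intro f hf
    rw [Measure.pi_of_empty]
    simp
  | succ n ih =>
    intro f hf
    have h := measurePreserving_piFinSuccAbove (fun _ : Fin (n+1) => (volume : Measure ℝ)) 0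
    set G : ℝ × (Fin n → ℝ) → ℝ≥0∞ := fun p => f 0 p.1 * ∏ j, f j.succ (p.2 j) with hG
    have hmeas2 : Measurable fun y : Fin n → ℝ => ∏ j, f j.succ (y j) :=
      Finset.measurable_prod _ fun j _ => (hf j.succ).comp (measurable_pi_apply j)
    have key : ∀ z : Fin (n+1) → ℝ, (∏ i, f i (z i)) =
        G ((MeasurableEquiv.piFinSuccAbove (fun _ => ℝ) 0) z) := by
      intro z
      rw [Fin.prod_univ_succ]
      simp [hG, MeasurableEquiv.piFinSuccAbove, Fin.succAbove_zero, Fin.tail]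
    calc ∫⁻ z, ∏ i, f i (z i) ∂(Measure.pi fun _ : Fin (n+1) => (volume : Measure ℝ))
        = ∫⁻ z, G ((MeasurableEquiv.piFinSuccAbove (fun _ => ℝ) 0) z)
            ∂(Measure.pi fun _ : Fin (n+1) => (volume : Measure ℝ)) := by
          simp_rw [key]
      _ = ∫⁻ p, G p ∂((volume : Measure ℝ).prod
            (Measure.pi fun _ : Fin n => (volume : Measure ℝ))) := by
          exact h.lintegral_comp (((hf 0).comp measurable_fst).mul (hmeas2.comp measurable_snd))
      _ = (∫⁻ x, f 0 x) * ∏ j : Fin n, ∫⁻ x, f j.succ x := by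
          rw [hG]
          rw [lintegral_prod_mul (hf 0).aemeasurable hmeas2.aemeasurable, ih _ fun j => hf j.succ]
      _ = ∏ i, ∫⁻ x, f i x := by rw [Fin.prod_univ_succ (fun i : Fin (n+1) => ∫⁻ x, f i x)]

lemma aux_pi_gaussian (n : ℕ) :
    (Measure.pi fun _ : Fin n => gaussianReal 0 1) =
      (Measure.pi fun _ : Fin n => (volume : Measure ℝ)).withDensity
        (fun z => ∏ i, gaussianPDF 0 1 (z i)) := by
  suffices H : ∀ s : Fin n → Set ℝ, (∀ i, MeasurableSet (s i)) →
      ((Measure.pi fun _ : Fin n => (volume : Measure ℝ)).withDensity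
        (fun z => ∏ i, gaussianPDF 0 1 (z i))) (Set.univ.pi s) = ∏ i, gaussianReal 0 1 (s i) by
    exact Measure.pi_eq H
  intro s hs
  have hmeas : Measurable fun z : Fin n → ℝ => ∏ i, gaussianPDF 0 1 (z i) :=
    Finset.measurable_prod _ fun i _ =>
      (measurable_gaussianPDF 0 1).comp (measurable_pi_apply i)
  rw [withDensity_apply _ (MeasurableSet.univ_pi hs)]
  rw [← lintegral_indicator (MeasurableSet.univ_pi hs)]
  have hind : ∀ z : Fin n → ℝ,
      (Set.univ.pi s).indicator (fun z => ∏ i, gaussianPDF 0 1 (z i)) z =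
        ∏ i, (s i).indicator (gaussianPDF 0 1) (z i) := by
    intro z
    by_cases hz : z ∈ Set.univ.pi s
    · rw [Set.indicator_of_mem hz]
      exact Finset.prod_congr rfl fun i _ =>
        (Set.indicator_of_mem (hz i (Set.mem_univ i)) _).symm
    · rw [Set.indicator_of_notMem hz]
      rw [Set.mem_univ_pi] at hz
      push_neg at hz
      obtain ⟨i, hi⟩ := hz
      exact (Finset.prod_eq_zero (Finset.mem_univ i)
        (Set.indicator_of_notMem hi _)).symm
  calc ∫⁻ z, (Set.univ.pi s).indicator (fun z => ∏ i, gaussianPDF 0 1 (z i)) z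
        ∂(Measure.pi fun _ : Fin n => (volume : Measure ℝ))
      = ∫⁻ z, ∏ i, (s i).indicator (gaussianPDF 0 1) (z i)
          ∂(Measure.pi fun _ : Fin n => (volume : Measure ℝ)) := by simp_rw [hind]
    _ = ∏ i, ∫⁻ x, (s i).indicator (gaussianPDF 0 1) x :=
        aux_lintegral_pi n _ fun i => (measurable_gaussianPDF 0 1).indicator (hs i)
    _ = ∏ i, gaussianReal 0 1 (s i) := by
        refine Finset.prod_congr rfl fun i _ => ?_
        rw [lintegral_indicator (hs i), gaussianReal_apply 0 one_ne_zero (s i)]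

lemma aux_prod_pdf {n : ℕ} (z : Fin n → ℝ) :
    ∏ i, gaussianPDF 0 1 (z i) =
      ENNReal.ofReal ((Real.sqrt (2 * Real.pi * 1))⁻¹ ^ n * Real.exp (-(∑ i, z i ^ 2) / 2)) := by
  have h1 : ∀ x : ℝ, gaussianPDFReal 0 1 x =
      (Real.sqrt (2 * Real.pi * 1))⁻¹ * Real.exp (-(x ^ 2) / 2) := by
    intro x; rw [gaussianPDFReal_def]; norm_num
  calc ∏ i, gaussianPDF 0 1 (z i) = ∏ i, ENNReal.ofReal (gaussianPDFReal 0 1 (z i)) := rfl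
    _ = ENNReal.ofReal (∏ i, gaussianPDFReal 0 1 (z i)) :=
        (ENNReal.ofReal_prod_of_nonneg fun i _ => gaussianPDFReal_nonneg 0 1 (z i)).symm
    _ = _ := by
        congr 1
        simp_rw [h1]
        rw [Finset.prod_mul_distrib, Finset.prod_const, ← Real.exp_sum]
        congr 2
        · simp
        · rw [← Finset.sum_div, ← Finset.sum_neg_distrib]

lemma aux_measurable_mulVec {n : ℕ} (M : Matrix (Fin n) (Fin n) ℝ) :
    Measurable (M.mulVec) := by
  have h : M.mulVec = ⇑(Matrix.toLin' M) := funext fun v => (Matrix.toLin'_apply M v).symm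
  rw [h]
  exact (LinearMap.continuous_on_pi _).measurable

lemma aux_measurable_prod_pdf {n : ℕ} :
    Measurable fun z : Fin n → ℝ => ∏ i, gaussianPDF 0 1 (z i) :=
  Finset.measurable_prod _ fun i _ =>
    (measurable_gaussianPDF 0 1).comp (measurable_pi_apply i)

lemma aux_transp_dot {n : ℕ} (M : Matrix (Fin n) (Fin n) ℝ) (u v : Fin n → ℝ) :
    (M *ᵥ u) ⬝ᵥ v = u ⬝ᵥ (Mᵀ *ᵥ v) := by
  rw [Matrix.dotProduct_mulVec, ← Matrix.mulVec_transpose, Matrix.transpose_transpose]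

lemma aux_rotation {n : ℕ} (V : Matrix (Fin n) (Fin n) ℝ)
    (h1 : V * Vᵀ = 1) (h2 : Vᵀ * V = 1) :
    Measure.map V.mulVec (Measure.pi fun _ : Fin n => gaussianReal 0 1) =
      Measure.pi fun _ : Fin n => gaussianReal 0 1 := by
  have hdet : V.det * V.det = 1 := by
    have h := congrArg Matrix.det h1
    rwa [Matrix.det_mul, Matrix.det_transpose, Matrix.det_one] at h
  have hdet0 : V.det ≠ 0 := by
    intro h; rw [h, zero_mul] at hdet; exact zero_ne_one hdet
  have habs : |V.det⁻¹| = 1 := by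
    have h : |V.det| * |V.det| = 1 := by rw [← abs_mul, hdet, abs_one]
    have habsV : |V.det| = 1 := by nlinarith [abs_nonneg V.det]
    rw [abs_inv, habsV]; norm_num
  have hmapvol : Measure.map V.mulVec (Measure.pi fun _ : Fin n => (volume : Measure ℝ)) =
      Measure.pi fun _ : Fin n => (volume : Measure ℝ) := by
    have hfun : ⇑(Matrix.toLin' V) = V.mulVec := funext fun v => Matrix.toLin'_apply V v
    have h := Real.map_matrix_volume_pi_eq_smul_volume_pi hdet0
    rw [hfun, habs, ENNReal.ofReal_one, one_smul] at h
    simpa [MeasureTheory.volume_pi] using h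
  have hsum : ∀ z : Fin n → ℝ, ∑ i, (V.mulVec z) i ^ 2 = ∑ i, z i ^ 2 := by
    intro z
    have e1 : ∀ w : Fin n → ℝ, ∑ i, w i ^ 2 = w ⬝ᵥ w := by
      intro w; simp [dotProduct, sq]
    rw [e1, e1]
    rw [aux_transp_dot, Matrix.mulVec_mulVec, h2, Matrix.one_mulVec]
  have hdens : ∀ z : Fin n → ℝ,
      (∏ i, gaussianPDF 0 1 ((V.mulVec z) i)) = ∏ i, gaussianPDF 0 1 (z i) := by
    intro z; rw [aux_prod_pdf, aux_prod_pdf, hsum]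
  rw [aux_pi_gaussian]
  ext s hs
  rw [Measure.map_apply (aux_measurable_mulVec V) hs,
    withDensity_apply _ ((aux_measurable_mulVec V) hs), withDensity_apply _ hs]
  calc ∫⁻ z in V.mulVec ⁻¹' s, ∏ i, gaussianPDF 0 1 (z i)
        ∂(Measure.pi fun _ : Fin n => (volume : Measure ℝ))
      = ∫⁻ z in V.mulVec ⁻¹' s, ∏ i, gaussianPDF 0 1 ((V.mulVec z) i)
          ∂(Measure.pi fun _ : Fin n => (volume : Measure ℝ)) := by
        refine setLIntegral_congr_fun ((aux_measurable_mulVec V) hs)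
          (fun z _ => (hdens z).symm)
    _ = ∫⁻ w in s, ∏ i, gaussianPDF 0 1 (w i)
          ∂(Measure.map V.mulVec (Measure.pi fun _ : Fin n => (volume : Measure ℝ))) :=
        (setLIntegral_map hs aux_measurable_prod_pdf (aux_measurable_mulVec V)).symm
    _ = ∫⁻ w in s, ∏ i, gaussianPDF 0 1 (w i)
          ∂(Measure.pi fun _ : Fin n => (volume : Measure ℝ)) := by rw [hmapvol]

lemma aux_marginal {n ν : ℕ} (p : Fin n → Prop) [DecidablePred p]
    (hcard : Fintype.card {i // p i} = ν) :
    Measure.map (fun w : Fin n → ℝ => ∑ i : {i // p i}, w i ^ 2)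
      (Measure.pi fun _ : Fin n => gaussianReal 0 1) =
    Measure.map (fun w : Fin ν → ℝ => ∑ i, w i ^ 2)
      (Measure.pi fun _ : Fin ν => gaussianReal 0 1) := by
  have hg : Measurable fun v : {i // p i} → ℝ => ∑ i, v i ^ 2 :=
    Finset.measurable_sum _ fun i _ => ((measurable_pi_apply i).pow_const 2)
  have hproj : Measurable fun w : Fin n → ℝ => (fun i : {i // p i} => w i) :=
    measurable_pi_lambda _ fun i => measurable_pi_apply (i : Fin n)
  -- Step 1: the projection pushes the pi gaussian to the pi gaussian on the subtype.
  have hstep1 : Measure.map (fun w : Fin n → ℝ => (fun i : {i // p i} => w i))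
      (Measure.pi fun _ : Fin n => gaussianReal 0 1) =
      Measure.pi fun _ : {i // p i} => gaussianReal 0 1 := by
    have h := (measurePreserving_piEquivPiSubtypeProd
      (fun _ : Fin n => gaussianReal 0 1) p).map_eq
    have hcomp : (fun w : Fin n → ℝ => (fun i : {i // p i} => w i)) =
        Prod.fst ∘ ⇑(MeasurableEquiv.piEquivPiSubtypeProd (fun _ : Fin n => ℝ) p) := rfl
    rw [hcomp, ← Measure.map_map measurable_fst
      (MeasurableEquiv.piEquivPiSubtypeProd (fun _ : Fin n => ℝ) p).measurable, h]
    exact Measure.fst_prod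
  -- Step 2: transfer along the equiv with Fin ν.
  have e : {i // p i} ≃ Fin ν := Fintype.equivFinOfCardEq hcard
  have h2 := (measurePreserving_piCongrLeft
    (fun _ : {i // p i} => gaussianReal 0 1) e.symm).map_eq
  calc Measure.map (fun w : Fin n → ℝ => ∑ i : {i // p i}, w i ^ 2)
        (Measure.pi fun _ : Fin n => gaussianReal 0 1)
      = Measure.map ((fun v : {i // p i} → ℝ => ∑ i, v i ^ 2) ∘
          (fun w : Fin n → ℝ => (fun i : {i // p i} => w i)))
          (Measure.pi fun _ : Fin n => gaussianReal 0 1) := rfl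
    _ = Measure.map (fun v : {i // p i} → ℝ => ∑ i, v i ^ 2)
          (Measure.pi fun _ : {i // p i} => gaussianReal 0 1) := by
        rw [← Measure.map_map hg hproj, hstep1]
    _ = Measure.map (fun v : {i // p i} → ℝ => ∑ i, v i ^ 2)
          (Measure.map (⇑(MeasurableEquiv.piCongrLeft (fun _ : {i // p i} => ℝ) e.symm))
            (Measure.pi fun _ : Fin ν => gaussianReal 0 1)) := by rw [h2]
    _ = Measure.map ((fun v : {i // p i} → ℝ => ∑ i, v i ^ 2) ∘
          ⇑(MeasurableEquiv.piCongrLeft (fun _ : {i // p i} => ℝ) e.symm))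
          (Measure.pi fun _ : Fin ν => gaussianReal 0 1) :=
        Measure.map_map hg (MeasurableEquiv.piCongrLeft _ e.symm).measurable
    _ = Measure.map (fun w : Fin ν → ℝ => ∑ i, w i ^ 2)
          (Measure.pi fun _ : Fin ν => gaussianReal 0 1) := by
        congr 1
        funext v
        simp only [Function.comp_apply]
        rw [← Equiv.sum_comp e.symm
          (fun i => ((MeasurableEquiv.piCongrLeft (fun _ : {i // p i} => ℝ) e.symm) v) i ^ 2)]
        refine Finset.sum_congr rfl fun j _ => ?_
        congr 1
        have hc : ⇑(MeasurableEquiv.piCongrLeft (fun _ : {i // p i} => ℝ) e.symm) =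
            ⇑(Equiv.piCongrLeft (fun _ : {i // p i} => ℝ) e.symm) :=
          MeasurableEquiv.coe_piCongrLeft e.symm
        rw [hc]
        exact Equiv.piCongrLeft_apply_apply (fun _ : {i // p i} => ℝ) e.symm v j

lemma aux_Sd_symm {n : ℕ} {S Sd : Matrix (Fin n) (Fin n) ℝ} (hSt : Sᵀ = S)
    (m1 : S * Sd * S = S) (m2 : Sd * S * Sd = Sd)
    (m3 : (S * Sd)ᵀ = S * Sd) (m4 : (Sd * S)ᵀ = Sd * S) :
    Sdᵀ = Sd := by
  have c1 : S * Sdᵀ * S = S := by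
    have h := congrArg Matrix.transpose m1
    rw [Matrix.transpose_mul, Matrix.transpose_mul, hSt] at h
    rw [Matrix.mul_assoc]
    exact h
  have c2 : Sdᵀ * S * Sdᵀ = Sdᵀ := by
    have h := congrArg Matrix.transpose m2
    rw [Matrix.transpose_mul, Matrix.transpose_mul, hSt] at h
    rw [Matrix.mul_assoc]
    exact h
  have c5 : Sdᵀ * S = S * Sd := by rw [← m3, Matrix.transpose_mul, hSt]
  have c3 : S * Sdᵀ = Sd * S := by rw [← m4, Matrix.transpose_mul, hSt]
  have hXX : (Sd * S) * (Sdᵀ * S) = Sd * S := by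
    calc (Sd * S) * (Sdᵀ * S) = Sd * (S * Sdᵀ * S) := by
          simp only [Matrix.mul_assoc]
      _ = Sd * S := by rw [c1]
  have htr : ((Sd * S) * (Sdᵀ * S))ᵀ = (S * Sd) * (S * Sdᵀ) := by
    simp [Matrix.transpose_mul, hSt, Matrix.mul_assoc]
  have hX : (S * Sd) * (Sd * S) = Sd * S := by
    calc (S * Sd) * (Sd * S) = (S * Sd) * (S * Sdᵀ) := by rw [c3]
      _ = ((Sd * S) * (Sdᵀ * S))ᵀ := htr.symm
      _ = (Sd * S)ᵀ := by rw [hXX]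
      _ = Sd * S := m4
  have hcomm : S * Sd = Sd * S := by
    calc S * Sd = Sdᵀ * S := c5.symm
      _ = Sdᵀ * (S * Sd * S) := by rw [m1]
      _ = (Sdᵀ * S) * (Sd * S) := by simp only [Matrix.mul_assoc]
      _ = (S * Sd) * (Sd * S) := by rw [c5]
      _ = Sd * S := hX
  have h1 : Sd = Sd * Sd * S := by
    calc Sd = Sd * S * Sd := m2.symm
      _ = Sd * (S * Sdᵀ * S) * Sd := by rw [c1]
      _ = Sd * (S * Sdᵀ) * (S * Sd) := by simp only [Matrix.mul_assoc]
      _ = Sd * (Sd * S) * (S * Sd) := by rw [c3]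
      _ = Sd * (Sd * S) * (Sdᵀ * S) := by rw [c5]
      _ = Sd * Sd * (S * Sdᵀ * S) := by simp only [Matrix.mul_assoc]
      _ = Sd * Sd * S := by rw [c1]
  calc Sdᵀ = Sdᵀ * S * Sdᵀ := c2.symm
    _ = (S * Sd) * Sdᵀ := by rw [c5]
    _ = (Sd * S) * Sdᵀ := by rw [hcomm]
    _ = Sd * (S * Sdᵀ) := by simp only [Matrix.mul_assoc]
    _ = Sd * (Sd * S) := by rw [c3]
    _ = Sd * Sd * S := by simp only [Matrix.mul_assoc]
    _ = Sd := h1.symm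

lemma aux_diag_eq {m : ℕ} {M : Matrix (Fin m) (Fin m) ℝ} (hM : M.IsHermitian)
    (hMM : M * M = M) :
    Matrix.diagonal hM.eigenvalues * Matrix.diagonal hM.eigenvalues =
      Matrix.diagonal hM.eigenvalues := by
  set U : Matrix (Fin m) (Fin m) ℝ := (hM.eigenvectorUnitary : Matrix (Fin m) (Fin m) ℝ)
    with hU
  have hUU : U * star U = 1 := Matrix.mem_unitaryGroup_iff.mp hM.eigenvectorUnitary.2
  have hUU' : star U * U = 1 := Matrix.mem_unitaryGroup_iff'.mp hM.eigenvectorUnitary.2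
  have hsp : M = U * Matrix.diagonal hM.eigenvalues * star U := by
    have h := hM.spectral_theorem
    rwa [RCLike.ofReal_real_eq_id, Function.id_comp] at h
  have hD0 : star U * M * U = star U * (U * Matrix.diagonal hM.eigenvalues * star U) * U :=
    congrArg (fun X => star U * X * U) hsp
  have hD : Matrix.diagonal hM.eigenvalues = star U * M * U := by
    rw [hD0]
    simp only [Matrix.mul_assoc]
    rw [hUU', Matrix.mul_one, ← Matrix.mul_assoc, hUU', Matrix.one_mul]
  rw [hD]
  calc (star U * M * U) * (star U * M * U) = star U * (M * (U * star U) * M) * U := by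
        simp only [Matrix.mul_assoc]
    _ = star U * (M * M) * U := by rw [hUU]; simp [Matrix.mul_assoc]
    _ = star U * M * U := by rw [hMM, Matrix.mul_assoc]

lemma aux_eig01 {m : ℕ} {M : Matrix (Fin m) (Fin m) ℝ} (hM : M.IsHermitian)
    (hMM : M * M = M) (i : Fin m) :
    hM.eigenvalues i = 0 ∨ hM.eigenvalues i = 1 := by
  have h := aux_diag_eq hM hMM
  rw [Matrix.diagonal_mul_diagonal] at h
  have h2 := congrFun (congrFun h i) i
  simp only [Matrix.diagonal_apply_eq, Pi.mul_apply] at h2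
  have h3 : hM.eigenvalues i * (hM.eigenvalues i - 1) = 0 := by ring_nf; linarith [h2]
  rcases mul_eq_zero.mp h3 with h4 | h4
  · exact Or.inl h4
  · exact Or.inr (by linarith [h4])

lemma aux_rank_trace {m : ℕ} {M : Matrix (Fin m) (Fin m) ℝ} (hM : M.IsHermitian)
    (hMM : M * M = M) :
    (M.rank : ℝ) = M.trace := by
  classical
  set U : Matrix (Fin m) (Fin m) ℝ := (hM.eigenvectorUnitary : Matrix (Fin m) (Fin m) ℝ)
  have hUU' : star U * U = 1 := Matrix.mem_unitaryGroup_iff'.mp hM.eigenvectorUnitary.2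
  have hsp : M = U * Matrix.diagonal hM.eigenvalues * star U := by
    have h := hM.spectral_theorem
    rwa [RCLike.ofReal_real_eq_id, Function.id_comp] at h
  have htr : M.trace = ∑ i, hM.eigenvalues i := by
    conv_lhs => rw [hsp]
    rw [Matrix.trace_mul_cycle, hUU', Matrix.one_mul, Matrix.trace_diagonal]
  rw [htr, hM.rank_eq_card_non_zero_eigs, Fintype.card_subtype, Finset.card_filter]
  push_cast
  refine Finset.sum_congr rfl fun i _ => ?_
  rcases aux_eig01 hM hMM i with h | h <;> simp [h]


/-- For a Gaussian vector `X` with mean `μ` and covariance `Σ = A Aᵀ` of rank `ν`, with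
`X − μ` a.s. in the range of `Σ`, the squared Mahalanobis distance
`(X−μ)* Σ† (X−μ)` is chi-squared distributed with `ν` degrees of freedom,
i.e. distributed as the sum of squares of `ν` i.i.d. standard normals. -/
theorem mahalanobis_chi_squared {Ω : Type*} [MeasurableSpace Ω]
    (P : Measure Ω) [IsProbabilityMeasure P]
    {n ν : ℕ} (μv : Fin n → ℝ) (S Sd A : Matrix (Fin n) (Fin n) ℝ)
    (hS : S.PosSemidef) (hrank : S.rank = ν) (hA : A * Aᵀ = S)
    (hMP : S * Sd * S = S ∧ Sd * S * Sd = Sd ∧ (S * Sd)ᵀ = S * Sd ∧ (Sd * S)ᵀ = Sd * S)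
    (X : Ω → Fin n → ℝ) (hXm : Measurable X)
    (hgauss : Measure.map X P =
      Measure.map (fun z => μv + A.mulVec z)
        (Measure.pi fun _ : Fin n => gaussianReal 0 1))
    (hsupp : ∀ᵐ ω ∂P, X ω - μv ∈ LinearMap.range S.mulVecLin) :
    Measure.map (fun ω => (X ω - μv) ⬝ᵥ Sd.mulVec (X ω - μv)) P =
      Measure.map (fun w : Fin ν → ℝ => ∑ i, (w i) ^ 2)
        (Measure.pi fun _ : Fin ν => gaussianReal 0 1) := by
  classical
  obtain ⟨m1, m2, m3, m4⟩ := hMP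
  have hSt : Sᵀ = S := by
    rw [← Matrix.conjTranspose_eq_transpose_of_trivial]; exact hS.1
  have hSd : Sdᵀ = Sd := aux_Sd_symm hSt m1 m2 m3 m4
  set Q : Matrix (Fin n) (Fin n) ℝ := Aᵀ * Sd * A with hQ
  have hQt : Qᵀ = Q := by
    calc (Aᵀ * Sd * A)ᵀ = Aᵀ * (Aᵀ * Sd)ᵀ := by rw [Matrix.transpose_mul]
      _ = Aᵀ * (Sdᵀ * Aᵀᵀ) := by rw [Matrix.transpose_mul]
      _ = Aᵀ * Sd * A := by rw [hSd, Matrix.transpose_transpose, Matrix.mul_assoc]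
  have hQH : Q.IsHermitian := by
    unfold Matrix.IsHermitian
    rw [Matrix.conjTranspose_eq_transpose_of_trivial]
    exact hQt
  have hQQ : Q * Q = Q := by
    calc (Aᵀ * Sd * A) * (Aᵀ * Sd * A)
        = Aᵀ * (Sd * (A * Aᵀ) * Sd) * A := by simp only [Matrix.mul_assoc]
      _ = Aᵀ * (Sd * S * Sd) * A := by rw [hA]
      _ = Aᵀ * Sd * A := by rw [m2]
  have hRH : (Sd * S).IsHermitian := by
    unfold Matrix.IsHermitian
    rw [Matrix.conjTranspose_eq_transpose_of_trivial]
    exact m4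
  have hRR : (Sd * S) * (Sd * S) = Sd * S := by
    calc (Sd * S) * (Sd * S) = Sd * (S * Sd * S) := by simp only [Matrix.mul_assoc]
      _ = Sd * S := by rw [m1]
  have htrQ : Q.trace = (Sd * S).trace := by
    calc (Aᵀ * Sd * A).trace = ((Aᵀ * Sd) * A).trace := rfl
      _ = (A * (Aᵀ * Sd)).trace := Matrix.trace_mul_comm _ _
      _ = ((A * Aᵀ) * Sd).trace := by rw [Matrix.mul_assoc]
      _ = (S * Sd).trace := by rw [hA]
      _ = (Sd * S).trace := Matrix.trace_mul_comm _ _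
  have hrk1 : (Sd * S).rank = S.rank := by
    refine le_antisymm (Matrix.rank_mul_le_right Sd S) ?_
    have hS2 : S = S * (Sd * S) := by
      conv_lhs => rw [← m1]
      rw [Matrix.mul_assoc]
    calc S.rank = (S * (Sd * S)).rank := by rw [← hS2]
      _ ≤ (Sd * S).rank := Matrix.rank_mul_le_right _ _
  have hrkQ : Q.rank = ν := by
    have h1 : (Q.rank : ℝ) = ((Sd * S).rank : ℝ) := by
      rw [aux_rank_trace hQH hQQ, aux_rank_trace hRH hRR, htrQ]
    have h2 : Q.rank = (Sd * S).rank := Nat.cast_injective h1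
    rw [h2, hrk1, hrank]
  -- spectral decomposition
  set d : Fin n → ℝ := hQH.eigenvalues with hd
  set U : Matrix (Fin n) (Fin n) ℝ := (hQH.eigenvectorUnitary : Matrix (Fin n) (Fin n) ℝ)
    with hU
  have hUU : U * star U = 1 := Matrix.mem_unitaryGroup_iff.mp hQH.eigenvectorUnitary.2
  have hUU' : star U * U = 1 := Matrix.mem_unitaryGroup_iff'.mp hQH.eigenvectorUnitary.2
  have hstar : star U = Uᵀ := by
    rw [Matrix.star_eq_conjTranspose, Matrix.conjTranspose_eq_transpose_of_trivial]
  have hsp : Q = U * Matrix.diagonal d * Uᵀ := by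
    have h := hQH.spectral_theorem
    rw [RCLike.ofReal_real_eq_id, Function.id_comp] at h
    rw [← hstar]; exact h
  rw [hstar] at hUU hUU'
  -- the quadratic form
  have quad : ∀ z : Fin n → ℝ,
      (A *ᵥ z) ⬝ᵥ (Sd *ᵥ (A *ᵥ z)) = ∑ i, d i * ((Uᵀ *ᵥ z) i) ^ 2 := by
    intro z
    calc (A *ᵥ z) ⬝ᵥ (Sd *ᵥ (A *ᵥ z)) = z ⬝ᵥ (Aᵀ *ᵥ (Sd *ᵥ (A *ᵥ z))) :=
          aux_transp_dot A z _
      _ = z ⬝ᵥ (Q *ᵥ z) := by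
          rw [Matrix.mulVec_mulVec, Matrix.mulVec_mulVec]
      _ = z ⬝ᵥ (U *ᵥ (Matrix.diagonal d *ᵥ (Uᵀ *ᵥ z))) := by
          rw [Matrix.mulVec_mulVec, Matrix.mulVec_mulVec, ← hsp]
      _ = (Uᵀ *ᵥ z) ⬝ᵥ (Matrix.diagonal d *ᵥ (Uᵀ *ᵥ z)) := by
          rw [dotProduct_comm, aux_transp_dot U, dotProduct_comm]
      _ = ∑ i, d i * ((Uᵀ *ᵥ z) i) ^ 2 := by
          simp only [dotProduct, Matrix.mulVec_diagonal]
          exact Finset.sum_congr rfl fun i _ => by ring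
  -- eigenvalues are 0 or 1
  set p : Fin n → Prop := fun i => d i ≠ 0 with hp
  have hcard : Fintype.card {i // p i} = ν := by
    rw [← hrkQ, hQH.rank_eq_card_non_zero_eigs]
  have hsum01 : ∀ w : Fin n → ℝ, ∑ i, d i * w i ^ 2 = ∑ i : {i // p i}, (w i) ^ 2 := by
    intro w
    rw [← Finset.sum_subtype (Finset.univ.filter p) (fun x => by simp [hp])
      (fun i => w i ^ 2)]
    rw [Finset.sum_filter]
    refine Finset.sum_congr rfl fun i _ => ?_
    have hdi := aux_eig01 hQH hQQ i
    rw [← hd] at hdi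
    rcases hdi with h | h
    · simp [h]
    · simp [h]
  -- measurability
  have hsub : Measurable (fun y : Fin n → ℝ => y - μv) := measurable_id.sub measurable_const
  have hgmeas : Measurable (fun y : Fin n → ℝ => (y - μv) ⬝ᵥ Sd.mulVec (y - μv)) := by
    show Measurable fun y : Fin n → ℝ => ∑ i, (y - μv) i * (Sd *ᵥ (y - μv)) i
    exact Finset.measurable_sum _ fun i _ =>
      ((measurable_pi_apply i).comp hsub).mul
        ((measurable_pi_apply i).comp ((aux_measurable_mulVec Sd).comp hsub))
  have hshift : Measurable (fun z : Fin n → ℝ => μv + A.mulVec z) :=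
    measurable_const.add (aux_measurable_mulVec A)
  have hsumsq : Measurable (fun w : Fin n → ℝ => ∑ i, d i * w i ^ 2) :=
    Finset.measurable_sum _ fun i _ => Measurable.const_mul (f := fun w : Fin n → ℝ => w i ^ 2) ((measurable_pi_apply i).pow_const 2) (d i)
  -- orthogonality of Uᵀ
  have hV1 : Uᵀ * (Uᵀ)ᵀ = 1 := by rw [Matrix.transpose_transpose]; exact hUU'
  have hV2 : (Uᵀ)ᵀ * Uᵀ = 1 := by rw [Matrix.transpose_transpose]; exact hUU
  -- assemble
  calc Measure.map (fun ω => (X ω - μv) ⬝ᵥ Sd.mulVec (X ω - μv)) P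
      = Measure.map ((fun y : Fin n → ℝ => (y - μv) ⬝ᵥ Sd.mulVec (y - μv)) ∘ X) P := rfl
    _ = Measure.map (fun y : Fin n → ℝ => (y - μv) ⬝ᵥ Sd.mulVec (y - μv))
          (Measure.map X P) := (Measure.map_map hgmeas hXm).symm
    _ = Measure.map (fun y : Fin n → ℝ => (y - μv) ⬝ᵥ Sd.mulVec (y - μv))
          (Measure.map (fun z => μv + A.mulVec z)
            (Measure.pi fun _ : Fin n => gaussianReal 0 1)) := by rw [hgauss]
    _ = Measure.map ((fun y : Fin n → ℝ => (y - μv) ⬝ᵥ Sd.mulVec (y - μv)) ∘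
          (fun z => μv + A.mulVec z)) (Measure.pi fun _ : Fin n => gaussianReal 0 1) :=
        Measure.map_map hgmeas hshift
    _ = Measure.map ((fun w : Fin n → ℝ => ∑ i, d i * w i ^ 2) ∘ Uᵀ.mulVec)
          (Measure.pi fun _ : Fin n => gaussianReal 0 1) := by
        congr 1
        funext z
        simp only [Function.comp_apply, add_sub_cancel_left]
        exact quad z
    _ = Measure.map (fun w : Fin n → ℝ => ∑ i, d i * w i ^ 2)
          (Measure.map Uᵀ.mulVec (Measure.pi fun _ : Fin n => gaussianReal 0 1)) :=
        (Measure.map_map hsumsq (aux_measurable_mulVec Uᵀ)).symm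
    _ = Measure.map (fun w : Fin n → ℝ => ∑ i, d i * w i ^ 2)
          (Measure.pi fun _ : Fin n => gaussianReal 0 1) := by
        rw [aux_rotation Uᵀ hV1 hV2]
    _ = Measure.map (fun w : Fin n → ℝ => ∑ i : {i // p i}, (w i) ^ 2)
          (Measure.pi fun _ : Fin n => gaussianReal 0 1) := by
        congr 1
        funext w
        exact hsum01 w
    _ = Measure.map (fun w : Fin ν → ℝ => ∑ i, (w i) ^ 2)
          (Measure.pi fun _ : Fin ν => gaussianReal 0 1) := aux_marginal p hcard
end

section
/- For d ≥ 1, a ≥ 0 and 0 ≤ r ≤ R, define g(r, a) = ∫₀^r x^{d−1} e^{−(x+a)²/2} dx. Then g(r, a)/g(R, a) ≥ g(r, 0)/g(R, 0). -/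
/-- With `g(r,a) = ∫₀^r x^{d−1} e^{−(x+a)²/2} dx`, for `a ≥ 0` and `0 ≤ r ≤ R`,
`g(r,a)/g(R,a) ≥ g(r,0)/g(R,0)`. -/
theorem truncated_ratio_inequality {d : ℕ} (hd : 1 ≤ d) (a : ℝ) (ha : 0 ≤ a)
    (r R : ℝ) (hr : 0 ≤ r) (hrR : r ≤ R) :
    let g : ℝ → ℝ → ℝ := fun r a =>
      ∫ x in (0 : ℝ)..r, x ^ (d - 1) * Real.exp (-(x + a) ^ 2 / 2)
    g r a / g R a ≥ g r 0 / g R 0 := by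
  intro g
  have hR : 0 ≤ R := hr.trans hrR
  rcases eq_or_lt_of_le hR with hR0 | hR0
  · have hr0 : r = 0 := le_antisymm (hrR.trans_eq hR0.symm) hr
    simp [g, hr0, ← hR0]
  have hcont : ∀ b : ℝ, Continuous fun x : ℝ => x ^ (d-1) * Real.exp (-(x + b)^2/2) := by
    intro b
    exact (continuous_pow _).mul ((continuous_id.add continuous_const).pow 2 |>.neg.div_const 2).rexp
  have hint : ∀ b u v : ℝ, IntervalIntegrable
      (fun x : ℝ => x ^ (d-1) * Real.exp (-(x + b)^2/2)) MeasureTheory.volume u v :=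
    fun b u v => (hcont b).intervalIntegrable u v
  have hpos : ∀ b : ℝ, 0 < g R b := by
    intro b
    refine intervalIntegral.intervalIntegral_pos_of_pos_on (hint b 0 R) ?_ hR0
    intro x hx
    exact mul_pos (pow_pos hx.1 _) (Real.exp_pos _)
  rw [ge_iff_le, div_le_div_iff₀ (hpos 0) (hpos a)]
  have hsplit : ∀ b : ℝ, g R b = g r b + ∫ x in r..R, x ^ (d-1) * Real.exp (-(x+b)^2/2) :=
    fun b => (intervalIntegral.integral_add_adjacent_intervals (hint b 0 r) (hint b r R)).symm
  set k : ℝ := Real.exp (-(a*r) - a^2/2) with hk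
  have hkpos : 0 < k := Real.exp_pos _
  have hA0 : 0 ≤ g r 0 := by
    refine intervalIntegral.integral_nonneg hr fun x hx => ?_
    exact mul_nonneg (pow_nonneg hx.1 _) (Real.exp_nonneg _)
  have hB0 : 0 ≤ ∫ x in r..R, x ^ (d-1) * Real.exp (-(x+(0:ℝ))^2/2) := by
    refine intervalIntegral.integral_nonneg hrR fun x hx => ?_
    exact mul_nonneg (pow_nonneg (hr.trans hx.1) _) (Real.exp_nonneg _)
  have hexp : ∀ x : ℝ, Real.exp (-(x+a)^2/2) =
      Real.exp (-(x+(0:ℝ))^2/2) * Real.exp (-(a*x) - a^2/2) := by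
    intro x
    rw [← Real.exp_add]
    ring_nf
  -- on [r,R]: weighted integrand ≤ k * unweighted integrand
  have hBa : (∫ x in r..R, x ^ (d-1) * Real.exp (-(x+a)^2/2))
      ≤ k * ∫ x in r..R, x ^ (d-1) * Real.exp (-(x+(0:ℝ))^2/2) := by
    rw [← intervalIntegral.integral_const_mul]
    refine intervalIntegral.integral_mono_on hrR (hint a r R)
      ((continuous_const.mul (hcont 0)).intervalIntegrable r R) fun x hx => ?_
    have hx0 : 0 ≤ x := hr.trans hx.1
    have hle : Real.exp (-(a*x) - a^2/2) ≤ k := by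
      apply Real.exp_le_exp.2
      have : a * r ≤ a * x := mul_le_mul_of_nonneg_left hx.1 ha
      linarith
    have hxp : (0:ℝ) ≤ x ^ (d-1) := pow_nonneg hx0 _
    have hE : (0:ℝ) ≤ Real.exp (-(x+(0:ℝ))^2/2) := Real.exp_nonneg _
    rw [hexp x]
    nlinarith [mul_nonneg hxp hE]
  -- on [0,r]: k * unweighted integrand ≤ weighted integrand
  have hAa : k * g r 0 ≤ g r a := by
    have key : (∫ x in (0:ℝ)..r, k * (x ^ (d-1) * Real.exp (-(x+(0:ℝ))^2/2)))
        ≤ ∫ x in (0:ℝ)..r, x ^ (d-1) * Real.exp (-(x+a)^2/2) := by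
      refine intervalIntegral.integral_mono_on hr
        ((continuous_const.mul (hcont 0)).intervalIntegrable 0 r) (hint a 0 r) fun x hx => ?_
      have hle : k ≤ Real.exp (-(a*x) - a^2/2) := by
        apply Real.exp_le_exp.2
        have : a * x ≤ a * r := mul_le_mul_of_nonneg_left hx.2 ha
        linarith
      have hxp : (0:ℝ) ≤ x ^ (d-1) := pow_nonneg hx.1 _
      have hE : (0:ℝ) ≤ Real.exp (-(x+(0:ℝ))^2/2) := Real.exp_nonneg _
      rw [hexp x]
      nlinarith [mul_nonneg hxp hE]
    calc k * g r 0 = ∫ x in (0:ℝ)..r, k * (x ^ (d-1) * Real.exp (-(x+(0:ℝ))^2/2)) :=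
          (intervalIntegral.integral_const_mul _ _).symm
      _ ≤ g r a := key
  rw [hsplit a, hsplit 0]
  have h1 : g r 0 * (∫ x in r..R, x ^ (d-1) * Real.exp (-(x+a)^2/2))
      ≤ g r a * ∫ x in r..R, x ^ (d-1) * Real.exp (-(x+(0:ℝ))^2/2) := by
    calc g r 0 * (∫ x in r..R, x ^ (d-1) * Real.exp (-(x+a)^2/2))
        ≤ g r 0 * (k * ∫ x in r..R, x ^ (d-1) * Real.exp (-(x+(0:ℝ))^2/2)) :=
          mul_le_mul_of_nonneg_left hBa hA0
      _ = (k * g r 0) * ∫ x in r..R, x ^ (d-1) * Real.exp (-(x+(0:ℝ))^2/2) := by ring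
      _ ≤ g r a * ∫ x in r..R, x ^ (d-1) * Real.exp (-(x+(0:ℝ))^2/2) :=
          mul_le_mul_of_nonneg_right hAa hB0
  nlinarith [h1]
end

section
/- Let f₁,…,f_d be nonnegative integers with Σᵢ fᵢ = N, N ≥ 1. Let x = f/N (the mode-derived relative frequency vector), μ = (f+1)/(N+d) (the Dirichlet mean), and Σ† the Moore–Penrose inverse of the Dirichlet covariance matrix, so that M² = (x−μ)* Σ† (x−μ) = ((N+d+1)/N²)·[(N+d) Σᵢ (fᵢ+1)⁻¹ − d²]. Then M² ≤ (N+d+1)(d−1)/(N+1). -/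
/-- The squared Mahalanobis distance between the multinomial mode `f/N` and the
Dirichlet mean `(f+1)/(N+d)` is bounded by `(N+d+1)(d−1)/(N+1)`. -/
theorem mode_in_confidence_region {d N : ℕ} (hN : 1 ≤ N) (f : Fin d → ℕ)
    (hf : ∑ i, f i = N) :
    ((N : ℝ) + d + 1) / (N : ℝ) ^ 2 *
        (((N : ℝ) + d) * (∑ i, ((f i : ℝ) + 1)⁻¹) - (d : ℝ) ^ 2)
      ≤ ((N : ℝ) + d + 1) * ((d : ℝ) - 1) / ((N : ℝ) + 1) := by
  have hN1 : (1:ℝ) ≤ (N:ℝ) := by exact_mod_cast hN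
  have hN2 : (0:ℝ) < (N:ℝ) + 1 := by linarith
  have hfi : ∀ i, (f i : ℝ) ≤ N := by
    intro i
    exact_mod_cast hf ▸ Finset.single_le_sum (fun j _ => Nat.zero_le _) (Finset.mem_univ i)
  have hterm : ∀ i, ((f i : ℝ) + 1)⁻¹ ≤ 1 - (f i : ℝ) / ((N:ℝ) + 1) := by
    intro i
    have h1 : (0:ℝ) < (f i : ℝ) + 1 := by positivity
    have heq : 1 - (f i : ℝ) / ((N:ℝ) + 1) = ((N:ℝ) + 1 - (f i : ℝ)) / ((N:ℝ) + 1) := by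
      field_simp
    rw [heq, ← one_div, div_le_div_iff₀ h1 hN2]
    nlinarith [hfi i, (f i).cast_nonneg (α := ℝ)]
  have hsum : ∑ i, ((f i : ℝ) + 1)⁻¹ ≤ (d : ℝ) - (N:ℝ) / ((N:ℝ) + 1) := by
    have hfsum : ∑ i, (f i : ℝ) = (N : ℝ) := by exact_mod_cast hf
    calc ∑ i, ((f i : ℝ) + 1)⁻¹ ≤ ∑ i, (1 - (f i : ℝ) / ((N:ℝ) + 1)) :=
          Finset.sum_le_sum fun i _ => hterm i
      _ = (d : ℝ) - (N:ℝ) / ((N:ℝ) + 1) := by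
          rw [Finset.sum_sub_distrib, ← Finset.sum_div, hfsum]
          simp [Finset.card_univ]
  have hsum' : ((N:ℝ) + 1) * (∑ i, ((f i : ℝ) + 1)⁻¹) ≤ ((N:ℝ) + 1) * d - N := by
    have := mul_le_mul_of_nonneg_left hsum (le_of_lt hN2)
    have hx : ((N:ℝ) + 1) * ((d : ℝ) - (N:ℝ) / ((N:ℝ) + 1)) = ((N:ℝ) + 1) * d - N := by
      field_simp
    linarith [hx ▸ this]
  have hNsq : (0:ℝ) < (N:ℝ) ^ 2 := by positivity
  rw [div_mul_eq_mul_div, div_le_div_iff₀ hNsq hN2]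
  have hd : (0:ℝ) ≤ (d:ℝ) := d.cast_nonneg
  nlinarith [mul_le_mul_of_nonneg_left hsum'
      (show (0:ℝ) ≤ ((N:ℝ) + d + 1) * ((N:ℝ) + d) by positivity)]
end
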